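/- Let n = 2p + 1 with p ≥ 1 an integer, let a_n = n^{1/(n-1)} - 1, let α_p = sin(2pπ/n)/(1 - cos(2pπ/n)), and let r be a real number with 0 < r ≤ 2/n. Then r²/24 < (a_{2p+1}/2)·α_p. -/

import Mathlib

open Real

/-- Lemma 5 part 1 (odd case): for `n = 2p+1` with `p ≥ 1` and `0 < r ≤ 2/n`,
`r²/24 < (a_{2p+1}/2)·α_p`. -/
theorem stmt_12 (p : ℕ) (hp : 1 ≤ p) (n : ℕ) (hn : n = 2 * p + 1)
    (an : ℝ) (han : an = (n : ℝ) ^ ((1 : ℝ) / ((n : ℝ) - 1)) - 1)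
    (α : ℝ) (hα : α = Real.sin (2 * p * Real.pi / n) /
      (1 - Real.cos (2 * p * Real.pi / n)))
    (r : ℝ) (hr0 : 0 < r) (hr : r ≤ 2 / n) :
    r ^ 2 / 24 < (an / 2) * α := by
  have hp1 : (1:ℝ) ≤ (p:ℝ) := by exact_mod_cast hp
  have hN3 : (3:ℝ) ≤ (n:ℝ) := by
    subst hn; push_cast; linarith
  have hN0 : (0:ℝ) < (n:ℝ) := by linarith
  -- rewrite the angle
  have hθ : 2 * (p:ℝ) * π / (n:ℝ) = π - π / (n:ℝ) := by
    have h2p : (2:ℝ) * (p:ℝ) = (n:ℝ) - 1 := by subst hn; push_cast; ring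
    field_simp [h2p]; linarith
  rw [hθ, Real.sin_pi_sub, Real.cos_pi_sub] at hα
  -- basic bounds on the angle π/n
  have hx0 : 0 < π / (n:ℝ) := by positivity
  have hx2 : π / (n:ℝ) ≤ π / 2 := by
    apply div_le_div_of_nonneg_left Real.pi_pos.le (by norm_num) (by linarith)
  have hsin : 2 / (n:ℝ) ≤ Real.sin (π / (n:ℝ)) := by
    have := Real.mul_le_sin hx0.le hx2
    have hπ : (0:ℝ) < π := Real.pi_pos
    calc 2 / (n:ℝ) = 2 / π * (π / (n:ℝ)) := by field_simp
    _ ≤ Real.sin (π / (n:ℝ)) := this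
  have hcos1 : Real.cos (π / (n:ℝ)) ≤ 1 := Real.cos_le_one _
  have hcos0 : 0 ≤ Real.cos (π / (n:ℝ)) :=
    Real.cos_nonneg_of_mem_Icc ⟨by linarith, hx2⟩
  -- lower bound for α
  have hαb : 1 / (n:ℝ) ≤ α := by
    rw [hα]
    have hden : (0:ℝ) < 1 - -Real.cos (π / (n:ℝ)) := by linarith
    rw [le_div_iff₀ hden]
    have : 1 / (n:ℝ) * (1 - -Real.cos (π / (n:ℝ))) ≤ 1 / (n:ℝ) * 2 := by
      apply mul_le_mul_of_nonneg_left (by linarith) (by positivity)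
    calc 1 / (n:ℝ) * (1 - -Real.cos (π / (n:ℝ))) ≤ 1 / (n:ℝ) * 2 := this
    _ = 2 / (n:ℝ) := by ring
    _ ≤ Real.sin (π / (n:ℝ)) := hsin
  -- lower bound for an
  have hlog : 1 < Real.log (n:ℝ) := by
    rw [Real.lt_log_iff_exp_lt hN0]
    calc Real.exp 1 < 2.7182818286 := Real.exp_one_lt_d9
    _ < 3 := by norm_num
    _ ≤ (n:ℝ) := hN3
  have hanb : 1 / (n:ℝ) < an := by
    have hrpow : (n:ℝ) ^ ((1:ℝ) / ((n:ℝ) - 1)) =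
        Real.exp (Real.log (n:ℝ) * ((1:ℝ) / ((n:ℝ) - 1))) :=
      Real.rpow_def_of_pos hN0 _
    have hexp : 1 + Real.log (n:ℝ) * ((1:ℝ) / ((n:ℝ) - 1)) ≤
        Real.exp (Real.log (n:ℝ) * ((1:ℝ) / ((n:ℝ) - 1))) := by
      have := Real.add_one_le_exp (Real.log (n:ℝ) * ((1:ℝ) / ((n:ℝ) - 1)))
      linarith
    have h1 : Real.log (n:ℝ) / ((n:ℝ) - 1) ≤ an := by
      rw [han, hrpow]
      have : Real.log (n:ℝ) * ((1:ℝ) / ((n:ℝ) - 1)) = Real.log (n:ℝ) / ((n:ℝ) - 1) := by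
        ring
      linarith [hexp, this ▸ hexp]
    have h2 : 1 / (n:ℝ) < Real.log (n:ℝ) / ((n:ℝ) - 1) := by
      rw [div_lt_div_iff₀ hN0 (by linarith)]
      nlinarith
    linarith
  -- conclude
  have hα0 : 0 < α := lt_of_lt_of_le (by positivity) hαb
  have key : 1 / (n:ℝ) * (1 / (n:ℝ)) < an * α :=
    mul_lt_mul hanb hαb (by positivity) (le_trans (by positivity) hanb.le)
  have hr2 : r ^ 2 ≤ 4 * (1 / (n:ℝ) * (1 / (n:ℝ))) := by
    have h2n : (0:ℝ) < 2 / (n:ℝ) := by positivity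
    have : r * r ≤ 2 / (n:ℝ) * (2 / (n:ℝ)) := mul_le_mul hr hr hr0.le h2n.le
    have heq : 2 / (n:ℝ) * (2 / (n:ℝ)) = 4 * (1 / (n:ℝ) * (1 / (n:ℝ))) := by ring
    nlinarith
  nlinarith [key, hr2]
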